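/- Let f: ℕ → ℕ be a non-constant polynomial with real coefficients taking positive integer values, and define x_n = 0.f(n)f(n+1)f(n+2)... ∈ [0,1) by concatenating the decimal expansions of f(n), f(n+1), .... Then (x_n) is not uniformly distributed mod 1 over [0.1, 1). -/

import Mathlib

open scoped Classical
open Filter

/-- Number of decimal digits of `m`. -/
def numDigits (m : ℕ) : ℕ := (Nat.digits 10 m).length

/-- The natural number obtained by concatenating the decimal expansions of
`a 0, a 1, …, a K`. -/
def concatBlock (a : ℕ → ℕ) : ℕ → ℕ
  | 0 => a 0
  | K + 1 => concatBlock a K * 10 ^ numDigits (a (K + 1)) + a (K + 1)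

/-- The total number of decimal digits of `a 0, a 1, …, a K`. -/
def totalDigits (a : ℕ → ℕ) : ℕ → ℕ
  | 0 => numDigits (a 0)
  | K + 1 => totalDigits a K + numDigits (a (K + 1))

/-- The real number `0.(a 0)(a 1)(a 2)…` obtained by concatenating the decimal
expansions of `a 0, a 1, a 2, …` after the decimal point. -/
noncomputable def concatReal (a : ℕ → ℕ) : ℝ :=
  ⨆ K : ℕ, (concatBlock a K : ℝ) / 10 ^ totalDigits a K

lemma lt_pow_numDigits (m : ℕ) : m < 10 ^ numDigits m :=
  Nat.lt_base_pow_length_digits (by norm_num)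

lemma numDigits_eq {m j : ℕ} (h1 : 10 ^ j ≤ m) (h2 : m < 10 ^ (j + 1)) :
    numDigits m = j + 1 := by
  have hm : m ≠ 0 := by
    have : 0 < 10 ^ j := Nat.pow_pos (by norm_num)
    omega
  rw [numDigits, Nat.digits_len 10 m (by norm_num) hm,
    Nat.log_eq_of_pow_le_of_lt_pow h1 h2]

lemma totalDigits_ge (a : ℕ → ℕ) (K : ℕ) : numDigits (a 0) ≤ totalDigits a K := by
  induction K with
  | zero => exact le_rfl
  | succ K ih => exact le_trans ih (Nat.le_add_right _ _)

lemma concatBlock_succ_le (a : ℕ → ℕ) (K : ℕ) :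
    concatBlock a K + 1 ≤ (a 0 + 1) * 10 ^ (totalDigits a K - numDigits (a 0)) := by
  induction K with
  | zero => simp [concatBlock, totalDigits]
  | succ K ih =>
    have hd : a (K + 1) + 1 ≤ 10 ^ numDigits (a (K + 1)) := lt_pow_numDigits _
    have hge := totalDigits_ge a K
    calc concatBlock a (K + 1) + 1
        = concatBlock a K * 10 ^ numDigits (a (K + 1)) + (a (K + 1) + 1) := by
          rw [concatBlock]; ring
      _ ≤ concatBlock a K * 10 ^ numDigits (a (K + 1)) + 10 ^ numDigits (a (K + 1)) := by
          omega
      _ = (concatBlock a K + 1) * 10 ^ numDigits (a (K + 1)) := by ring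
      _ ≤ ((a 0 + 1) * 10 ^ (totalDigits a K - numDigits (a 0))) *
            10 ^ numDigits (a (K + 1)) := Nat.mul_le_mul_right _ ih
      _ = (a 0 + 1) * 10 ^ (totalDigits a (K + 1) - numDigits (a 0)) := by
          rw [mul_assoc, ← pow_add]
          congr 2
          show totalDigits a K - numDigits (a 0) + numDigits (a (K + 1))
              = totalDigits a K + numDigits (a (K + 1)) - numDigits (a 0)
          omega

lemma term_le (a : ℕ → ℕ) (K : ℕ) :
    (concatBlock a K : ℝ) / 10 ^ totalDigits a K ≤ ((a 0 : ℝ) + 1) / 10 ^ numDigits (a 0) := by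
  have hge := totalDigits_ge a K
  have h : concatBlock a K * 10 ^ numDigits (a 0) ≤ (a 0 + 1) * 10 ^ totalDigits a K := by
    calc concatBlock a K * 10 ^ numDigits (a 0)
        ≤ ((a 0 + 1) * 10 ^ (totalDigits a K - numDigits (a 0))) * 10 ^ numDigits (a 0) :=
          Nat.mul_le_mul_right _ (by have := concatBlock_succ_le a K; omega)
      _ = (a 0 + 1) * 10 ^ totalDigits a K := by
          rw [mul_assoc, ← pow_add]; congr 2; omega
  rw [div_le_div_iff₀ (by positivity) (by positivity)]
  exact_mod_cast h

lemma bddAbove_concat (a : ℕ → ℕ) :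
    BddAbove (Set.range fun K => (concatBlock a K : ℝ) / 10 ^ totalDigits a K) := by
  refine ⟨((a 0 : ℝ) + 1) / 10 ^ numDigits (a 0), ?_⟩
  rintro y ⟨K, rfl⟩
  exact term_le a K

lemma concatReal_le (a : ℕ → ℕ) :
    concatReal a ≤ ((a 0 : ℝ) + 1) / 10 ^ numDigits (a 0) :=
  ciSup_le (term_le a)

lemma le_concatReal (a : ℕ → ℕ) :
    (a 0 : ℝ) / 10 ^ numDigits (a 0) ≤ concatReal a := by
  have := le_ciSup (bddAbove_concat a) 0
  simp only [concatBlock, totalDigits] at this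
  exact this

lemma concatReal_mem_Ico (a : ℕ → ℕ) (j : ℕ)
    (h1 : 10 * 10 ^ j ≤ a 0) (h2 : a 0 < 19 * 10 ^ j) :
    concatReal a ∈ Set.Ico (0.1 : ℝ) 0.2 := by
  have hD : numDigits (a 0) = j + 2 := by
    apply numDigits_eq
    · calc 10 ^ (j + 1) = 10 * 10 ^ j := by ring
        _ ≤ a 0 := h1
    · calc a 0 < 19 * 10 ^ j := h2
        _ < 10 ^ (j + 2) := by
            have : (10:ℕ) ^ (j + 2) = 100 * 10 ^ j := by ring
            rw [this]
            have : 0 < 10 ^ j := Nat.pow_pos (by norm_num)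
            nlinarith
  constructor
  · refine le_trans ?_ (le_concatReal a)
    rw [hD, le_div_iff₀ (by positivity)]
    have h1' : (10:ℝ) * 10 ^ j ≤ (a 0 : ℝ) := by exact_mod_cast h1
    have : (0.1 : ℝ) * 10 ^ (j + 2) = 10 * 10 ^ j := by ring
    linarith [this]
  · refine lt_of_le_of_lt (concatReal_le a) ?_
    rw [hD, div_lt_iff₀ (by positivity)]
    have h2' : (a 0 : ℝ) + 1 ≤ 19 * 10 ^ j := by exact_mod_cast h2
    have : (0.2 : ℝ) * 10 ^ (j + 2) = 20 * 10 ^ j := by ring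
    have hp : (0:ℝ) < 10 ^ j := by positivity
    nlinarith

lemma arith_contra (rr δ p q α β : ℝ) (hr0 : 0 < rr) (hr1 : rr < 1)
    (hδ : δ = (1 - rr) / 10) (hp0 : 0 < p) (hq0 : 0 < q)
    (hc : α + (q - p) ≤ β) (hA : (1 / 9 - δ) * p ≤ α) (hB : β < (1 / 9 + δ) * q)
    (hpq : p ≤ (rr + δ) * q) : False := by
  have h1 : (8 / 9 - δ) * q < (8 / 9 + δ) * p := by nlinarith
  have h2 : (8 / 9 + δ) * p ≤ (8 / 9 + δ) * ((rr + δ) * q) := by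
    apply mul_le_mul_of_nonneg_left hpq
    nlinarith
  have h3 : 8 / 9 - δ < (8 / 9 + δ) * (rr + δ) := by
    have := lt_of_lt_of_le h1 h2
    nlinarith
  nlinarith

/-- `x` is uniformly distributed mod 1 over `[α, β)`. -/
def UDOver (x : ℕ → ℝ) (α β : ℝ) : Prop :=
  ∀ a b : ℝ, α ≤ a → a < b → b ≤ β →
    Filter.Tendsto
      (fun N : ℕ => (((Finset.Icc 1 N).filter (fun n => x n ∈ Set.Ico a b)).card : ℝ) / N)
      Filter.atTop (nhds ((b - a) / (β - α)))

/-- Let `F : ℕ → ℕ` be a non-constant polynomial with real coefficients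
taking positive integer values, and let
`x n = 0.(F n)(F (n+1))(F (n+2))…`. Then `(x n)` is not uniformly
distributed mod 1 over `[0.1, 1)`. -/
theorem stmt14 (f : Polynomial ℝ) (hd : 1 ≤ f.natDegree)
    (F : ℕ → ℕ) (hF : ∀ n : ℕ, (F n : ℝ) = f.eval (n : ℝ)) (hpos : ∀ n, 0 < F n) :
    ¬ UDOver (fun n => concatReal (fun i => F (n + i))) 0.1 1 := by
  intro h
  set x : ℕ → ℝ := fun n => concatReal (fun i => F (n + i)) with hx
  set Acount : ℕ → ℕ :=
    fun N => ((Finset.Icc 1 N).filter (fun n => x n ∈ Set.Ico (0.1 : ℝ) 0.2)).card with hAc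
  have hlim : Filter.Tendsto (fun N : ℕ => (Acount N : ℝ) / N) atTop (nhds (1 / 9)) := by
    have := h 0.1 0.2 le_rfl (by norm_num) (by norm_num)
    have h19 : ((0.2 : ℝ) - 0.1) / (1 - 0.1) = 1 / 9 := by norm_num
    rw [h19] at this
    exact this
  have hf0 : f ≠ 0 := fun h0 => by simp [h0] at hd
  set d := f.natDegree with hdd
  have hdne : d ≠ 0 := by omega
  have hdeg : 0 < f.degree := Polynomial.natDegree_pos_iff_degree_pos.mp (by omega)
  set c := f.leadingCoeff with hc
  have hc0 : 0 < c := by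
    rcases lt_or_ge 0 c with h' | h'
    · exact h'
    · exfalso
      have ht := Polynomial.tendsto_atBot_of_leadingCoeff_nonpos f hdeg h'
      have h2 : ∀ᶠ n : ℕ in atTop, f.eval (n : ℝ) < 0 :=
        (tendsto_natCast_atTop_atTop (R := ℝ)).eventually (ht.eventually (eventually_lt_atBot 0))
      obtain ⟨n, hn⟩ := h2.exists
      have : (0 : ℝ) < F n := by exact_mod_cast hpos n
      rw [hF n] at this
      linarith
  -- asymptotic band
  have hne : ∀ᶠ X : ℝ in atTop, c * X ^ d ≠ 0 := by
    filter_upwards [eventually_gt_atTop 0] with X hX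
    positivity
  have htend : Filter.Tendsto (fun X => f.eval X / (c * X ^ d)) atTop (nhds 1) := by
    have := (Asymptotics.isEquivalent_iff_tendsto_one hne).mp f.isEquivalent_atTop_lead
    exact this
  have hband : ∀ᶠ X : ℝ in atTop,
      0.9 * (c * X ^ d) ≤ f.eval X ∧ f.eval X ≤ 1.1 * (c * X ^ d) := by
    filter_upwards [Metric.tendsto_nhds.mp htend 0.1 (by norm_num),
      eventually_gt_atTop 0] with X h1 h2
    have hp : (0 : ℝ) < c * X ^ d := by positivity
    rw [Real.dist_eq, abs_lt] at h1
    obtain ⟨hl, hr⟩ := h1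
    constructor
    · have : 0.9 < f.eval X / (c * X ^ d) := by linarith
      rw [lt_div_iff₀ hp] at this
      linarith
    · have : f.eval X / (c * X ^ d) < 1.1 := by linarith
      rw [div_lt_iff₀ hp] at this
      linarith
  have hbandN : ∀ᶠ n : ℕ in atTop,
      0.9 * (c * (n : ℝ) ^ d) ≤ (F n : ℝ) ∧ (F n : ℝ) ≤ 1.1 * (c * (n : ℝ) ^ d) := by
    filter_upwards [(tendsto_natCast_atTop_atTop (R := ℝ)).eventually hband] with n hn
    rw [hF n]; exact hn
  obtain ⟨n0, hn0⟩ := eventually_atTop.mp hbandN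
  -- sequences
  set rr : ℝ := (110 / 171 : ℝ) ^ ((d : ℝ)⁻¹) with hrr
  have hdpos : (0 : ℝ) < (d : ℝ)⁻¹ := by
    have : (0 : ℝ) < (d : ℝ) := by exact_mod_cast Nat.pos_of_ne_zero hdne
    positivity
  have hr0 : 0 < rr := Real.rpow_pos_of_pos (by norm_num) _
  have hr1 : rr < 1 := Real.rpow_lt_one (by norm_num) (by norm_num) hdpos
  set A : ℕ → ℝ := fun j => ((10 * 10 ^ j) / (0.9 * c)) ^ ((d : ℝ)⁻¹) with hA
  set B : ℕ → ℝ := fun j => ((19 * 10 ^ j) / (1.1 * c)) ^ ((d : ℝ)⁻¹) with hB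
  have hApos : ∀ j, 0 < A j := fun j => Real.rpow_pos_of_pos (by positivity) _
  have hBpos : ∀ j, 0 < B j := fun j => Real.rpow_pos_of_pos (by positivity) _
  have hAB : ∀ j, A j = rr * B j := by
    intro j
    rw [hA, hB, hrr, ← Real.mul_rpow (by norm_num) (by positivity)]
    congr 1
    field_simp
    ring
  have hBtop : Filter.Tendsto B atTop atTop := by
    apply (tendsto_rpow_atTop hdpos).comp
    apply Filter.Tendsto.atTop_div_const (by positivity)
    exact (tendsto_pow_atTop_atTop_of_one_lt (by norm_num : (1:ℝ) < 10)).const_mul_atTop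
      (by norm_num)
  have hAtop : Filter.Tendsto A atTop atTop := by
    apply (tendsto_rpow_atTop hdpos).comp
    apply Filter.Tendsto.atTop_div_const (by positivity)
    exact (tendsto_pow_atTop_atTop_of_one_lt (by norm_num : (1:ℝ) < 10)).const_mul_atTop
      (by norm_num)
  set a : ℕ → ℕ := fun j => ⌈A j⌉₊ with ha
  set b : ℕ → ℕ := fun j => ⌈B j⌉₊ - 1 with hb
  have hAa : ∀ j, A j ≤ (a j : ℝ) := fun j => Nat.le_ceil _
  have haA : ∀ j, (a j : ℝ) < A j + 1 := fun j => Nat.ceil_lt_add_one (hApos j).le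
  have hceilB : ∀ j, 1 ≤ ⌈B j⌉₊ := fun j => Nat.ceil_pos.mpr (hBpos j)
  have hbcast : ∀ j, (b j : ℝ) = (⌈B j⌉₊ : ℝ) - 1 := by
    intro j
    show ((⌈B j⌉₊ - 1 : ℕ) : ℝ) = (⌈B j⌉₊ : ℝ) - 1
    rw [Nat.cast_sub (hceilB j), Nat.cast_one]
  have hbB : ∀ j, (b j : ℝ) < B j := by
    intro j
    rw [hbcast j]
    have := Nat.ceil_lt_add_one (hBpos j).le
    linarith
  have hBb : ∀ j, B j - 1 ≤ (b j : ℝ) := by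
    intro j
    rw [hbcast j]
    have := Nat.le_ceil (B j)
    linarith
  have hatop : Filter.Tendsto a atTop atTop := by
    rw [Filter.tendsto_atTop]
    intro m
    filter_upwards [hAtop.eventually_ge_atTop (m : ℝ)] with j hj
    exact_mod_cast le_trans hj (hAa j)
  have hbtop : Filter.Tendsto b atTop atTop := by
    rw [Filter.tendsto_atTop]
    intro m
    filter_upwards [hBtop.eventually_ge_atTop ((m : ℝ) + 1)] with j hj
    have : (m : ℝ) ≤ (b j : ℝ) := by linarith [hBb j]
    exact_mod_cast this
  -- pow identities
  have hApow : ∀ j, A j ^ d = (10 * 10 ^ j) / (0.9 * c) := by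
    intro j
    exact Real.rpow_inv_natCast_pow (by positivity) hdne
  have hBpow : ∀ j, B j ^ d = (19 * 10 ^ j) / (1.1 * c) := by
    intro j
    exact Real.rpow_inv_natCast_pow (by positivity) hdne
  -- membership property
  have hmem : ∀ᶠ j : ℕ in atTop, ∀ n : ℕ, a j < n → n ≤ b j →
      x n ∈ Set.Ico (0.1 : ℝ) 0.2 := by
    filter_upwards [hatop.eventually_ge_atTop n0] with j hj n h1 h2
    have hn0n : n0 ≤ n := le_trans hj h1.le
    obtain ⟨hlow, hhigh⟩ := hn0 n hn0n
    have hnA : A j ≤ (n : ℝ) := le_trans (hAa j) (by exact_mod_cast h1.le)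
    have hnB : (n : ℝ) < B j := lt_of_le_of_lt (by exact_mod_cast h2) (hbB j)
    have hFlow : 10 * 10 ^ j ≤ F n := by
      have h3 : A j ^ d ≤ (n : ℝ) ^ d := pow_le_pow_left₀ (hApos j).le hnA d
      rw [hApow j] at h3
      have h4 := (div_le_iff₀ (by positivity : (0:ℝ) < 0.9 * c)).mp h3
      have : (10 : ℝ) * 10 ^ j ≤ (F n : ℝ) := by nlinarith
      exact_mod_cast this
    have hFhigh : F n < 19 * 10 ^ j := by
      have h3 : (n : ℝ) ^ d < B j ^ d := by
        apply pow_lt_pow_left₀ hnB (by positivity) hdne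
      rw [hBpow j] at h3
      have h4 := (lt_div_iff₀ (by positivity : (0:ℝ) < 1.1 * c)).mp h3
      have : (F n : ℝ) < 19 * 10 ^ j := by nlinarith
      exact_mod_cast this
    have := concatReal_mem_Ico (fun i => F (n + i)) j (by simpa using hFlow) (by simpa using hFhigh)
    exact this
  -- a j < b j eventually
  have habgap : ∀ᶠ j : ℕ in atTop, a j < b j := by
    filter_upwards [hBtop.eventually_ge_atTop (4 / (1 - rr))] with j hj
    have h4 : 4 ≤ B j - rr * B j := by
      rw [div_le_iff₀ (by linarith : (0:ℝ) < 1 - rr)] at hj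
      nlinarith
    have : (a j : ℝ) < (b j : ℝ) := by
      have h1 := haA j
      have h2 := hAB j
      have h3 := hBb j
      linarith
    exact_mod_cast this
  -- counting
  have hcount : ∀ᶠ j : ℕ in atTop,
      Acount (a j) + (b j - a j) ≤ Acount (b j) := by
    filter_upwards [hmem, habgap] with j hj hab
    have hsub : (Finset.Icc 1 (a j)).filter (fun n => x n ∈ Set.Ico (0.1 : ℝ) 0.2)
          ∪ Finset.Ioc (a j) (b j)
        ⊆ (Finset.Icc 1 (b j)).filter (fun n => x n ∈ Set.Ico (0.1 : ℝ) 0.2) := by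
      intro n hn
      rcases Finset.mem_union.mp hn with hn | hn
      · rw [Finset.mem_filter, Finset.mem_Icc] at hn ⊢
        exact ⟨⟨hn.1.1, le_trans hn.1.2 hab.le⟩, hn.2⟩
      · rw [Finset.mem_Ioc] at hn
        rw [Finset.mem_filter, Finset.mem_Icc]
        exact ⟨⟨by omega, hn.2⟩, hj n hn.1 hn.2⟩
    have hdisj : Disjoint
        ((Finset.Icc 1 (a j)).filter (fun n => x n ∈ Set.Ico (0.1 : ℝ) 0.2))
        (Finset.Ioc (a j) (b j)) := by
      rw [Finset.disjoint_left]
      intro n hn hn'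
      rw [Finset.mem_filter, Finset.mem_Icc] at hn
      rw [Finset.mem_Ioc] at hn'
      omega
    have hcard := Finset.card_le_card hsub
    rw [Finset.card_union_of_disjoint hdisj, Nat.card_Ioc] at hcard
    exact hcard
  -- final contradiction
  set δ : ℝ := (1 - rr) / 10 with hδ
  have hδ0 : 0 < δ := by rw [hδ]; linarith
  have hev : ∀ᶠ N : ℕ in atTop, |(Acount N : ℝ) / N - 1 / 9| < δ := by
    filter_upwards [Metric.tendsto_nhds.mp hlim δ hδ0] with N hN
    rw [Real.dist_eq] at hN
    exact hN
  have hratio : ∀ᶠ j : ℕ in atTop, (a j : ℝ) ≤ (rr + δ) * (b j : ℝ) := by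
    filter_upwards [hbtop.eventually_ge_atTop ⌈(2 : ℝ) / δ⌉₊] with j hj
    have h1 : ((2 : ℝ) / δ) ≤ (b j : ℝ) :=
      le_trans (Nat.le_ceil _) (Nat.cast_le.mpr hj)
    have h3 : 2 ≤ δ * (b j : ℝ) := by
      rw [div_le_iff₀ hδ0] at h1
      linarith
    have h4 := haA j
    have h5 := hAB j
    have h7 := hBb j
    nlinarith [hr0.le, hr1.le]
  obtain ⟨j, h₁, h₂, h₃, h₄, h₅, h₆⟩ :=
    ((hatop.eventually hev).and ((hbtop.eventually hev).and (hcount.and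
      (hratio.and (habgap.and (hatop.eventually_ge_atTop 1)))))).exists
  have hp0 : (0 : ℝ) < (a j : ℝ) := by exact_mod_cast h₆
  have hq0 : (0 : ℝ) < (b j : ℝ) := lt_trans hp0 (by exact_mod_cast h₅)
  have hcast : (Acount (a j) : ℝ) + ((b j : ℝ) - (a j : ℝ)) ≤ (Acount (b j) : ℝ) := by
    have h' : ((Acount (a j) + (b j - a j) : ℕ) : ℝ) ≤ ((Acount (b j) : ℕ) : ℝ) :=
      Nat.cast_le.mpr h₃
    push_cast [Nat.cast_sub h₅.le] at h'
    linarith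
  rw [abs_lt] at h₁ h₂
  have hA1 : (1 / 9 - δ) * (a j : ℝ) ≤ (Acount (a j) : ℝ) := by
    have h' : 1 / 9 - δ < (Acount (a j) : ℝ) / (a j : ℝ) := by linarith [h₁.1]
    rw [lt_div_iff₀ hp0] at h'
    linarith
  have hB1 : (Acount (b j) : ℝ) < (1 / 9 + δ) * (b j : ℝ) := by
    have h' : (Acount (b j) : ℝ) / (b j : ℝ) < 1 / 9 + δ := by linarith [h₂.2]
    rw [div_lt_iff₀ hq0] at h'
    linarith
  exact arith_contra rr δ (a j) (b j) (Acount (a j)) (Acount (b j)) hr0 hr1 hδ hp0 hq0 hcast hA1 hB1 h₄
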